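/- Let p be a prime and a > b ≥ 0 integers and 0 < j < p. Then C(a*p, b*p + j) ≡ (a-b)*C(a,b)*C(p,j) (mod p^2). -/

import Mathlib

open Finset

private lemma sum_int_modEq {ι : Type*} {s : Finset ι} {f g : ι → ℤ} {n : ℤ}
    (h : ∀ i ∈ s, f i ≡ g i [ZMOD n]) : (∑ i ∈ s, f i) ≡ (∑ i ∈ s, g i) [ZMOD n] :=
  Int.modEq_iff_dvd.2 (by
    rw [← Finset.sum_sub_distrib]
    exact Finset.dvd_sum fun i hi => (h i hi).dvd)

private lemma lucas_mul (p : ℕ) (hp : p.Prime) (a m : ℕ) :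
    ((a * p).choose m : ℤ) ≡ ((0).choose (m % p) : ℕ) * ((a).choose (m / p) : ℕ) [ZMOD p] := by
  haveI : Fact p.Prime := ⟨hp⟩
  have := Choose.choose_modEq_choose_mod_mul_choose_div (n := a * p) (k := m) (p := p)
  rwa [Nat.mul_mod_left, Nat.mul_div_cancel _ hp.pos] at this

private lemma lucas_zero (p : ℕ) (hp : p.Prime) (a m : ℕ) (hm : ¬ p ∣ m) :
    (p : ℤ) ∣ ((a * p).choose m : ℤ) := by
  have h := lucas_mul p hp a m
  have h0 : m % p ≠ 0 := fun h0 => hm (Nat.dvd_of_mod_eq_zero h0)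
  rw [Nat.choose_eq_zero_of_lt (Nat.pos_of_ne_zero h0)] at h
  simpa using (Int.modEq_zero_iff_dvd).1 (by simpa using h)

private lemma lucas_one (p : ℕ) (hp : p.Prime) (a b : ℕ) :
    ((a * p).choose (b * p) : ℤ) ≡ (a.choose b : ℤ) [ZMOD p] := by
  have h := lucas_mul p hp a (b * p)
  rwa [Nat.mul_mod_left, Nat.mul_div_cancel _ hp.pos, Nat.choose_self, Nat.cast_one, one_mul]
    at h

theorem stmt_7 (p : ℕ) (hp : p.Prime) (a b j : ℕ) (hab : b < a) (hj0 : 0 < j) (hjp : j < p) :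
    (((a * p).choose (b * p + j) : ℤ))
      ≡ ((a : ℤ) - b) * (a.choose b) * (p.choose j) [ZMOD ((p : ℤ) ^ 2)] := by
  have hdvdj : (p : ℤ) ∣ (p.choose j : ℤ) :=
    Int.natCast_dvd_natCast.2 (hp.dvd_choose_self hj0.ne' hjp)
  induction a generalizing b with
  | zero => omega
  | succ a' IH =>
    have hba : b ≤ a' := Nat.lt_succ_iff.mp hab
    have hppos := hp.pos
    set n := b * p + j with hn
    -- expand via Vandermonde
    have expand : (((a' + 1) * p).choose n : ℤ)
        = ∑ k ∈ range (n + 1), ((a' * p).choose k : ℤ) * (p.choose (n - k)) := by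
      have h1 : (a' + 1) * p = a' * p + p := by ring
      rw [h1, Nat.add_choose_eq, Finset.Nat.sum_antidiagonal_eq_sum_range_succ_mk]
      push_cast
      rfl
    set X : ℤ := ((a' * p).choose n : ℤ) with hX
    set Y : ℤ := ((a' * p).choose (b * p) : ℤ) * (p.choose j : ℤ) with hY
    -- termwise congruence
    have claim : ∀ k ∈ range (n + 1),
        ((a' * p).choose k : ℤ) * (p.choose (n - k))
          ≡ ((if k = n then X else 0) + (if k = b * p then Y else 0)
              + (if k + p = n then ((a' * p).choose k : ℤ) else 0)) [ZMOD ((p : ℤ) ^ 2)] := by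
      intro k hk
      rw [Finset.mem_range] at hk
      have hkn : k ≤ n := by omega
      by_cases h1 : k = n
      · subst h1
        rw [if_pos rfl, if_neg (by omega), if_neg (by omega)]
        simp
        exact Int.ModEq.refl _
      by_cases h2 : k = b * p
      · subst h2
        rw [if_neg h1, if_pos rfl, if_neg (by omega)]
        have hnb : n - b * p = j := by omega
        rw [hnb, hY]
        simp
      by_cases h3 : k + p = n
      · rw [if_neg h1, if_neg h2, if_pos h3]
        have hnk : n - k = p := by omega
        rw [hnk, Nat.choose_self]
        simp
      · rw [if_neg h1, if_neg h2, if_neg h3]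
        set d := n - k with hd
        rcases lt_or_ge p d with hpd | hpd
        · rw [Nat.choose_eq_zero_of_lt hpd]
          simp
        · have hd0 : 0 < d := by omega
          have hdp : d < p := by omega
          have hdvd1 : (p : ℤ) ∣ (p.choose d : ℤ) :=
            Int.natCast_dvd_natCast.2 (hp.dvd_choose_self hd0.ne' hdp)
          have hpk : ¬ p ∣ k := by
            rintro ⟨c, hc⟩
            have e1 : (p * c + d) % p = d := by
              rw [Nat.mul_add_mod]; exact Nat.mod_eq_of_lt hdp
            have e2 : (b * p + j) % p = j := by
              rw [Nat.mul_comm, Nat.mul_add_mod]; exact Nat.mod_eq_of_lt hjp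
            have e3 : p * c + d = b * p + j := by omega
            rw [e3, e2] at e1
            omega
          have hdvd2 : (p : ℤ) ∣ ((a' * p).choose k : ℤ) := lucas_zero p hp a' k hpk
          refine Int.modEq_zero_iff_dvd.2 ?_
          rw [sq]
          exact mul_dvd_mul hdvd2 hdvd1
    have step1 := (expand ▸ sum_int_modEq claim :
      (((a' + 1) * p).choose n : ℤ) ≡ _ [ZMOD ((p : ℤ) ^ 2)])
    rw [Finset.sum_add_distrib, Finset.sum_add_distrib, Finset.sum_ite_eq' (range (n + 1)) n,
      Finset.sum_ite_eq' (range (n + 1)) (b * p), if_pos (Finset.mem_range.2 (by omega)),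
      if_pos (Finset.mem_range.2 (by omega))] at step1
    -- congruences for X and Y
    have hXc : X ≡ ((a' : ℤ) - b) * (a'.choose b) * (p.choose j) [ZMOD ((p : ℤ) ^ 2)] := by
      rcases lt_or_eq_of_le hba with h | h
      · exact IH b h
      · subst h
        rw [hX, hn, Nat.choose_eq_zero_of_lt (by omega)]
        simp
    have hYc : Y ≡ (a'.choose b : ℤ) * (p.choose j) [ZMOD ((p : ℤ) ^ 2)] := by
      refine Int.modEq_iff_dvd.2 ?_
      have h1 := (lucas_one p hp a' b).dvd
      rw [sq]
      have h2 := mul_dvd_mul h1 hdvdj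
      convert h2 using 1
      · rfl
      rw [hY]; ring
    -- now split on b to evaluate the third sum
    rcases b with _ | b''
    · have hZ : (∑ k ∈ range (n + 1),
          if k + p = n then ((a' * p).choose k : ℤ) else 0) = 0 :=
        Finset.sum_eq_zero fun k hk => if_neg (by
          rw [Finset.mem_range] at hk; omega)
      rw [hZ, add_zero] at step1
      refine step1.trans ((hXc.add hYc).trans ?_)
      rw [Int.ModEq]
      push_cast [Nat.choose_zero_right]
      ring_nf
    · have hb'' : b'' * p + j ∈ range (n + 1) := Finset.mem_range.2 (by
        have : n = b'' * p + j + p := by rw [hn]; ring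
        omega)
      have hZ : (∑ k ∈ range (n + 1),
          if k + p = n then ((a' * p).choose k : ℤ) else 0)
          = ((a' * p).choose (b'' * p + j) : ℤ) := by
        rw [Finset.sum_congr rfl (fun k _ => if_congr (show k + p = n ↔ k = b'' * p + j by
          have e : (b'' + 1) * p = b'' * p + p := by ring
          omega) rfl rfl),
          Finset.sum_ite_eq' (range (n + 1)) (b'' * p + j), if_pos hb'']
      rw [hZ] at step1
      have hZc := IH b'' (by omega)
      refine step1.trans (((hXc.add hYc).add hZc).trans ?_)
      rw [Int.ModEq]
      have pascal : (a' + 1).choose (b'' + 1) = a'.choose b'' + a'.choose (b'' + 1) :=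
        Nat.choose_succ_succ a' b''
      rw [pascal]
      push_cast
      ring_nf
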